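/- Let K be a commutative ring, v, w : ℕ → K, and A^{v,w}(n,k) defined by the recurrence A^{v,w}(n,k) = A^{v,w}(n-1,k-1) + (v_{n-1}+w_k)·A^{v,w}(n-1,k) with standard initial conditions. Then for every n and every x in K: ∏_{i=0}^{n-1}(x + v_i) = ∑_{k=0}^{n} A^{v,w}(n,k) · ∏_{i=0}^{k-1}(x − w_i). -/
import Mathlib


open Finset

/-- The generalized two-weight array `A^{v,w}(n,k)`. -/
def A {K : Type*} [CommRing K] (v w : ℕ → K) : ℕ → ℕ → K
  | 0, 0 => 1
  | 0, _ + 1 => 0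
  | n + 1, 0 => (v n + w 0) * A v w n 0
  | n + 1, k + 1 => A v w n k + (v n + w (k + 1)) * A v w n (k + 1)

lemma A_eq_zero {K : Type*} [CommRing K] (v w : ℕ → K) :
    ∀ n k, n < k → A v w n k = 0 := by
  intro n
  induction n with
  | zero =>
    intro k hk
    match k, hk with
    | k + 1, _ => rfl
  | succ n ih =>
    intro k hk
    match k, hk with
    | k + 1, hk =>
      have h1 : n < k := Nat.lt_of_succ_lt_succ hk
      have h2 : n < k + 1 := Nat.lt_succ_of_lt h1
      show A v w n k + (v n + w (k + 1)) * A v w n (k + 1) = 0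
      rw [ih k h1, ih (k + 1) h2]; ring

theorem stmt_4 {K : Type*} [CommRing K] (v w : ℕ → K) (n : ℕ) (x : K) :
    ∏ i ∈ Finset.range n, (x + v i) =
      ∑ k ∈ Finset.range (n + 1), A v w n k * ∏ i ∈ Finset.range k, (x - w i) := by
  induction n with
  | zero => simp [A]
  | succ n ih =>
    rw [prod_range_succ, ih, sum_mul]
    have key : ∀ k ∈ Finset.range (n + 1),
        A v w n k * (∏ i ∈ range k, (x - w i)) * (x + v n)
        = A v w n k * ∏ i ∈ range (k + 1), (x - w i)
          + (v n + w k) * (A v w n k * ∏ i ∈ range k, (x - w i)) := by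
      intro k _
      rw [prod_range_succ]; ring
    rw [Finset.sum_congr rfl key, Finset.sum_add_distrib]
    rw [Finset.sum_range_succ'
      (fun k => A v w (n + 1) k * ∏ i ∈ range k, (x - w i)) (n + 1)]
    have key2 : ∀ k ∈ Finset.range (n + 1),
        A v w (n + 1) (k + 1) * ∏ i ∈ range (k + 1), (x - w i)
        = A v w n k * ∏ i ∈ range (k + 1), (x - w i)
          + (v n + w (k + 1)) * (A v w n (k + 1) * ∏ i ∈ range (k + 1), (x - w i)) := by
      intro k _
      show (A v w n k + (v n + w (k + 1)) * A v w n (k + 1)) * _ = _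
      ring
    rw [Finset.sum_congr rfl key2, Finset.sum_add_distrib]
    have e0 : A v w (n + 1) 0 = (v n + w 0) * A v w n 0 := rfl
    simp only [e0, prod_range_zero, mul_one]
    rw [Finset.sum_range_succ'
      (fun k => (v n + w k) * (A v w n k * ∏ i ∈ range k, (x - w i))) n]
    rw [Finset.sum_range_succ
      (fun k => (v n + w (k + 1)) * (A v w n (k + 1) * ∏ i ∈ range (k + 1), (x - w i))) n]
    rw [A_eq_zero v w n (n + 1) (Nat.lt_succ_self n)]
    simp only [prod_range_zero, mul_one, mul_zero, zero_mul, add_zero]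
    ring
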